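/- Let Σ be a 2×2 real symmetric positive definite matrix with entries Σ₁₁, Σ₁₂ = Σ₂₁, Σ₂₂ such that D := Σ₁₁ − 2Σ₁₂ + Σ₂₂ > 0. Set η = √(det Σ), t = √(Σ₁₁ + Σ₂₂ + 2η), S = (1/t)(Σ + η·I₂), T = (t/((Σ₁₁+η)(Σ₂₂+η) − Σ₁₂²))·[[Σ₂₂+η, −Σ₁₂], [−Σ₁₂, Σ₁₁+η]], and w* = (Σ₂₂ − Σ₁₂)/D. Then the row vector (w*, 1−w*)·S equals (det Σ / D) times the row vector (1, 1)·T. -/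

import Mathlib

open Matrix

/-- Key algebraic identity in the proof of Corollary 4.1: with `S = Σ^{1/2}`
and `T = Σ^{-1/2}` given explicitly, and `w* = (Σ₂₂ − Σ₁₂)/D` the optimal
weight, the row vector `(w*, 1−w*)·S` equals `(det Σ / D)` times `(1,1)·T`. -/
theorem stmt4 (Sg : Matrix (Fin 2) (Fin 2) ℝ) (hSg : Sg.PosDef)
    (hD : 0 < Sg 0 0 - 2 * Sg 0 1 + Sg 1 1) :
    let D : ℝ := Sg 0 0 - 2 * Sg 0 1 + Sg 1 1
    let η : ℝ := Real.sqrt Sg.det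
    let t : ℝ := Real.sqrt (Sg 0 0 + Sg 1 1 + 2 * η)
    let S : Matrix (Fin 2) (Fin 2) ℝ := t⁻¹ • (Sg + η • (1 : Matrix (Fin 2) (Fin 2) ℝ))
    let T : Matrix (Fin 2) (Fin 2) ℝ :=
      (t / ((Sg 0 0 + η) * (Sg 1 1 + η) - (Sg 0 1) ^ 2)) •
        !![Sg 1 1 + η, -(Sg 0 1); -(Sg 0 1), Sg 0 0 + η]
    let wstar : ℝ := (Sg 1 1 - Sg 0 1) / D
    Matrix.vecMul ![wstar, 1 - wstar] S = (Sg.det / D) • Matrix.vecMul ![1, 1] T := by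
  intro D η t S T wstar
  have hsym : Sg 1 0 = Sg 0 1 := by
    simpa using (hSg.isHermitian.apply 1 0).symm
  have hdet : 0 < Sg.det := hSg.det_pos
  have hη : 0 < η := Real.sqrt_pos.mpr hdet
  have he2 : η ^ 2 = Sg 0 0 * Sg 1 1 - Sg 0 1 ^ 2 := by
    rw [Real.sq_sqrt hdet.le, Matrix.det_fin_two, hsym]; ring
  have h00 : 0 < Sg 0 0 := by
    exact hSg.diag_pos (i := 0)
  have h11 : 0 < Sg 1 1 := by
    exact hSg.diag_pos (i := 1)
  have ht : 0 < t := Real.sqrt_pos.mpr (by positivity)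
  have ht2 : t ^ 2 = Sg 0 0 + Sg 1 1 + 2 * η := Real.sq_sqrt (by positivity)
  have hK : (Sg 0 0 + η) * (Sg 1 1 + η) - (Sg 0 1) ^ 2 = η * t ^ 2 := by
    rw [ht2]; nlinarith [he2]
  have hdet' : Sg.det = η ^ 2 := (Real.sq_sqrt hdet.le).symm
  have hDne : D ≠ 0 := hD.ne'
  funext j
  fin_cases j <;>
    simp only [S, T, wstar, vecMul, dotProduct, Fin.sum_univ_two, Matrix.smul_apply,
      Matrix.add_apply, Matrix.one_apply, Pi.smul_apply, hdet', hK,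
      Matrix.cons_val_zero, Matrix.cons_val_one, Matrix.head_cons, Matrix.head_fin_const,
      Matrix.cons_val', Matrix.empty_val', Matrix.cons_val_fin_one, Fin.mk_zero, Fin.mk_one, hsym, smul_eq_mul, Matrix.of_apply, if_true, Fin.one_eq_zero_iff, Fin.zero_eq_one_iff, one_ne_zero, zero_ne_one, if_false, OfNat.ofNat_ne_one]
  · field_simp
    linear_combination (-1)*he2
  · field_simp
    linear_combination (-1)*he2
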